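/- Let G be a bridgeless graph with d(G)=4 and let uv be an edge with l_G(uv) = g*(G) = 9. Then each of the sets S_{1,2}, S_{2,1}, S_{2,3}, S_{3,2}, S_{3,4}, S_{4,3}, S_{4,4} is nonempty; moreover every vertex of S_{1,2} has a neighbor in S_{2,3}, every vertex of S_{2,1} has a neighbor in S_{3,2}, every vertex of S_{2,3} has a neighbor in S_{3,4}, every vertex of S_{3,2} has a neighbor in S_{4,3}, every vertex of S_{3,4} has a neighbor in S_{4,4}, every vertex of S_{4,3} has a neighbor in S_{4,4}, and every vertex of S_{4,4} has a neighbor in S_{3,4} and a neighbor in S_{4,3}. -/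

import Mathlib

/-- A multigraph: vertices `V`, edges `E`, each edge has two distinct endpoints. -/
structure Multigraph (V : Type*) (E : Type*) where
  ends : E → Sym2 V
  loopless : ∀ e, ¬ (ends e).IsDiag

namespace Multigraph

variable {V E : Type*}

/-- Adjacency in a multigraph: some edge joins `x` and `y`. -/
def Adjm (G : Multigraph V E) (x y : V) : Prop := ∃ e, G.ends e = s(x, y)

/-- The underlying simple graph of a multigraph. -/
def toSimple (G : Multigraph V E) : SimpleGraph V where
  Adj x y := x ≠ y ∧ G.Adjm x y
  symm := ⟨by
    rintro x y ⟨hne, e, he⟩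
    exact ⟨hne.symm, e, he.trans (Sym2.eq_swap)⟩⟩
  loopless := ⟨by rintro x ⟨hne, -⟩; exact hne rfl⟩

/-- Distance between two vertices (length of a shortest path). -/
noncomputable def dist (G : Multigraph V E) (x y : V) : ℕ := G.toSimple.dist x y

/-- The diameter of a multigraph. -/
noncomputable def diam (G : Multigraph V E) : ℕ := sSup {n | ∃ x y, G.dist x y = n}

/-- The multigraph obtained by deleting the edge `e₀`. -/
def deleteEdge (G : Multigraph V E) (e₀ : E) : Multigraph V {e : E // e ≠ e₀} where
  ends e := G.ends e.1
  loopless e := G.loopless e.1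

/-- A (connected) multigraph is bridgeless if deleting any single edge leaves it connected. -/
def Bridgeless (G : Multigraph V E) : Prop :=
  ∀ e : E, ((G.deleteEdge e).toSimple).Connected

/-- Walks in a multigraph, recording the edges used. -/
inductive Walk (G : Multigraph V E) : V → V → Type _
  | nil {v : V} : Walk G v v
  | cons {x y z : V} (e : E) (he : G.ends e = s(x, y)) (p : Walk G y z) : Walk G x z

namespace Walk

variable {G : Multigraph V E}

/-- The length (number of edges) of a walk. -/
def length : ∀ {x y : V}, G.Walk x y → ℕ
  | _, _, .nil => 0
  | _, _, .cons _ _ p => p.length + 1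

/-- The list of edges of a walk. -/
def edges : ∀ {x y : V}, G.Walk x y → List E
  | _, _, .nil => []
  | _, _, .cons e _ p => e :: p.edges

/-- The list of vertices of a walk. -/
def support : ∀ {x y : V}, G.Walk x y → List V
  | x, _, .nil => [x]
  | x, _, .cons _ _ p => x :: p.support

/-- A closed walk is a cycle if its edges are distinct and its vertices
(other than the repeated base point) are distinct. -/
def IsCycle {v : V} (p : G.Walk v v) : Prop :=
  p.edges.Nodup ∧ p.support.tail.Nodup ∧ 0 < p.length

end Walk

/-- The edge girth of `e`: the length of a shortest cycle containing `e`. -/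
noncomputable def edgeGirth (G : Multigraph V E) (e : E) : ℕ :=
  sInf {n | ∃ (v : V) (p : G.Walk v v), p.IsCycle ∧ e ∈ p.edges ∧ p.length = n}

/-- The maximum edge girth `g*(G)`. -/
noncomputable def maxEdgeGirth (G : Multigraph V E) : ℕ :=
  sSup (Set.range fun e => G.edgeGirth e)

/-- An orientation of a multigraph: each edge is assigned a direction. -/
structure Orientation (G : Multigraph V E) where
  dir : E → V × V
  compat : ∀ e, s((dir e).1, (dir e).2) = G.ends e

/-- Arcs of an orientation. -/
def Orientation.DAdj {G : Multigraph V E} (o : G.Orientation) (x y : V) : Prop :=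
  ∃ e, o.dir e = (x, y)

/-- Directed distance in an orientation (`⊤` if unreachable). -/
noncomputable def Orientation.ddist {G : Multigraph V E} (o : G.Orientation) (x y : V) : ℕ∞ :=
  sInf {n : ℕ∞ | ∃ l : List V, List.Chain o.DAdj x l ∧
    (x :: l).getLast (List.cons_ne_nil x l) = y ∧ (l.length : ℕ∞) = n}

/-- An orientation is strong if every vertex is reachable from every vertex by a directed path. -/
def Orientation.IsStrong {G : Multigraph V E} (o : G.Orientation) : Prop :=
  ∀ x y : V, o.ddist x y ≠ ⊤

/-- The diameter of an orientation. -/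
noncomputable def Orientation.odiam {G : Multigraph V E} (o : G.Orientation) : ℕ∞ :=
  ⨆ (x : V) (y : V), o.ddist x y

end Multigraph

namespace Multigraph

variable {V E : Type*}

/-- `S G u v i j` is the set of vertices at distance `i` from `u` and `j` from `v`. -/
noncomputable def S (G : Multigraph V E) (u v : V) (i j : ℕ) : Set V :=
  {w | G.dist w u = i ∧ G.dist w v = j}

/-- The neighbourhood of a vertex. -/
def nbhd (G : Multigraph V E) (w : V) : Set V := {x | G.Adjm w x}

end Multigraph

namespace Multigraph

variable {V E : Type*} {G : Multigraph V E}

lemma ne_of_ends_eq {f : E} {x y : V} (h : G.ends f = s(x, y)) : x ≠ y := by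
  intro hxy
  exact G.loopless f (by rw [h, hxy]; exact Sym2.mk_isDiag_iff.2 rfl)

lemma toSimple_adj {x y : V} : G.toSimple.Adj x y ↔ x ≠ y ∧ G.Adjm x y := Iff.rfl

lemma adj_of_ends_eq {f : E} {x y : V} (h : G.ends f = s(x, y)) : G.toSimple.Adj x y :=
  ⟨ne_of_ends_eq h, f, h⟩

lemma exists_simple_walk {x y : V} (p : G.Walk x y) :
    ∃ p' : G.toSimple.Walk x y, p'.length = p.length := by
  induction p with
  | nil => exact ⟨.nil, rfl⟩
  | cons f hf q ih =>
    obtain ⟨p', hp'⟩ := ih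
    exact ⟨.cons (adj_of_ends_eq hf) p', by simp only [SimpleGraph.Walk.length_cons,
      Walk.length, hp']⟩

lemma Walk.dist_le {x y : V} (p : G.Walk x y) : G.toSimple.dist x y ≤ p.length := by
  obtain ⟨p', hp'⟩ := exists_simple_walk p
  exact hp' ▸ SimpleGraph.dist_le p'

lemma exists_del_walk {e₀ : E} {x y : V} (p : G.Walk x y) (h : e₀ ∉ p.edges) :
    ∃ p' : (G.deleteEdge e₀).Walk x y, p'.length = p.length := by
  induction p with
  | nil => exact ⟨.nil, rfl⟩
  | cons f hf q ih =>
    simp only [Walk.edges, List.mem_cons, not_or] at h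
    obtain ⟨p', hp'⟩ := ih h.2
    exact ⟨.cons ⟨f, fun hfe => h.1 hfe.symm⟩ hf p',
      by simp only [Walk.length, hp']⟩

lemma Walk.del_dist_le {e₀ : E} {x y : V} (p : G.Walk x y) (h : e₀ ∉ p.edges) :
    (G.deleteEdge e₀).toSimple.dist x y ≤ p.length := by
  obtain ⟨p', hp'⟩ := exists_del_walk p h
  exact hp' ▸ p'.dist_le

lemma exists_le_walk {e₀ : E} {x y : V} (p : (G.deleteEdge e₀).toSimple.Walk x y) :
    ∃ p' : G.toSimple.Walk x y, p'.length = p.length := by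
  induction p with
  | nil => exact ⟨.nil, rfl⟩
  | cons hadj q ih =>
    obtain ⟨p', hp'⟩ := ih
    obtain ⟨hne, f, hf⟩ := id hadj
    exact ⟨.cons (adj_of_ends_eq (show G.ends f.1 = _ from hf)) p', by simp only [SimpleGraph.Walk.length_cons, hp']⟩

/-- Split a walk at an occurrence of an edge `f`. -/
lemma Walk.exists_split {f : E} {x y : V} (p : G.Walk x y) (hf : f ∈ p.edges) :
    ∃ (c d : V) (_ : G.ends f = s(c, d)) (q : G.Walk x c) (r : G.Walk d y),
      p.length = q.length + 1 + r.length ∧ p.edges = q.edges ++ f :: r.edges := by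
  induction p with
  | nil => simp [Walk.edges] at hf
  | @cons a b c g hg q ih =>
    simp only [Walk.edges, List.mem_cons] at hf
    rcases eq_or_ne f g with rfl | hne
    · exact ⟨a, b, hg, .nil, q, by simp only [Walk.length]; omega, by simp [Walk.edges]⟩
    · have hf' : f ∈ q.edges := hf.resolve_left hne
      obtain ⟨c', d', h, q', r', hlen, hed⟩ := ih hf'
      refine ⟨c', d', h, .cons g hg q', r', ?_, ?_⟩
      · simp only [Walk.length]; omega
      · simp [Walk.edges, hed]

/-- From a simple-graph path in the edge-deleted graph, produce a multigraph walk with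
nodup edges avoiding `e₀`. -/
lemma exists_walk_of_simplePath {e₀ : E} {x y : V}
    (q : (G.deleteEdge e₀).toSimple.Walk x y) (hq : q.IsPath) :
    ∃ p : G.Walk x y, p.length = q.length ∧ e₀ ∉ p.edges ∧ p.edges.Nodup ∧
      p.support = q.support ∧
      (∀ f ∈ p.edges, ∀ z, z ∈ G.ends f → z ∈ q.support) := by
  induction q with
  | nil =>
    exact ⟨.nil, by simp [Walk.length, Walk.edges, Walk.support]⟩
  | @cons a b c hadj q ih =>
    obtain ⟨hq', hnotmem⟩ := (SimpleGraph.Walk.cons_isPath_iff _ _).1 hq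
    obtain ⟨p, hl, hne, hnd, hsup, hinv⟩ := ih hq'
    obtain ⟨hab, f, hfe⟩ := id hadj
    have hfe' : G.ends f.1 = s(a, b) := hfe
    refine ⟨.cons f.1 hfe' p, ?_, ?_, ?_, ?_, ?_⟩
    · simp only [Walk.length, SimpleGraph.Walk.length_cons, hl]
    · simp only [Walk.edges, List.mem_cons, not_or]
      exact ⟨fun h => f.2 h.symm, hne⟩
    · simp only [Walk.edges, List.nodup_cons]
      refine ⟨fun hmem => ?_, hnd⟩
      exact hnotmem (hinv f.1 hmem a (by rw [hfe']; exact Sym2.mem_iff.2 (Or.inl rfl)))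
    · simp only [Walk.support, SimpleGraph.Walk.support_cons, hsup]
    · intro g hg z hz
      rw [SimpleGraph.Walk.support_cons]
      simp only [Walk.edges, List.mem_cons] at hg
      rcases hg with rfl | hg
      · rw [hfe'] at hz
        rcases Sym2.mem_iff.1 hz with rfl | rfl
        · exact List.mem_cons_self
        · exact List.mem_cons_of_mem _ q.start_mem_support
      · exact List.mem_cons_of_mem _ (hinv g hg z hz)

/-- Every cycle through `e` has length at least the edge girth. -/
lemma le_length_of_cycle {e : E} {w : V} (p : G.Walk w w) (hc : p.IsCycle)
    (hme : e ∈ p.edges) : G.edgeGirth e ≤ p.length :=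
  Nat.sInf_le ⟨w, p, hc, hme, rfl⟩

/-- If the edge girth of `e` is positive then some cycle through `e` achieves it. -/
lemma exists_cycle_of_edgeGirth_pos {e : E} (h : G.edgeGirth e ≠ 0) :
    ∃ (w : V) (p : G.Walk w w), p.IsCycle ∧ e ∈ p.edges ∧ p.length = G.edgeGirth e := by
  have hne : {n | ∃ (w : V) (p : G.Walk w w), p.IsCycle ∧ e ∈ p.edges ∧
      p.length = n}.Nonempty := by
    by_contra hcon
    rw [Set.not_nonempty_iff_eq_empty] at hcon
    rw [edgeGirth, hcon, Nat.sInf_empty] at h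
    exact h rfl
  exact Nat.sInf_mem hne

/-- The deleted distance between the endpoints of an edge of girth 9 is 8. -/
lemma dist_del_eq_eight {e : E} {u v : V} (he : G.ends e = s(u, v))
    (hg : G.edgeGirth e = 9)
    (hconn' : (G.deleteEdge e).toSimple.Connected) :
    (G.deleteEdge e).toSimple.dist u v = 8 := by
  classical
  have hge : 8 ≤ (G.deleteEdge e).toSimple.dist v u := by
    obtain ⟨W, hW⟩ := hconn'.exists_walk_length_eq_dist v u
    obtain ⟨p, hl, hne, hnd, hsup, -⟩ := exists_walk_of_simplePath W.bypass W.bypass_isPath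
    have hcyc : (Walk.cons e he p).IsCycle := by
      refine ⟨?_, ?_, ?_⟩
      · simp only [Walk.edges]
        exact List.nodup_cons.2 ⟨hne, hnd⟩
      · simp only [Walk.support, List.tail_cons, hsup]
        exact W.bypass_isPath.support_nodup
      · simp only [Walk.length]; omega
    have h9 := le_length_of_cycle _ hcyc
      (by simp only [Walk.edges]; exact List.mem_cons_self)
    simp only [Walk.length] at h9
    rw [hg] at h9
    have hbl : W.bypass.length ≤ (G.deleteEdge e).toSimple.dist v u :=
      hW ▸ W.length_bypass_le
    omega
  have hle : (G.deleteEdge e).toSimple.dist u v ≤ 8 := by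
    obtain ⟨w, p, hc, hme, hlen⟩ := exists_cycle_of_edgeGirth_pos (G := G) (e := e) (by rw [hg]; omega)
    rw [hg] at hlen
    obtain ⟨c, d, hcd, q, r, hql, hqe⟩ := p.exists_split hme
    have hnd := hc.1
    rw [hqe] at hnd
    have hnq : e ∉ q.edges := fun h =>
      (List.disjoint_of_nodup_append hnd) h List.mem_cons_self
    have hnr : e ∉ r.edges := by
      have h2 := (List.nodup_append.1 hnd).2.1
      exact (List.nodup_cons.1 h2).1
    have h1 : (G.deleteEdge e).toSimple.dist w c ≤ q.length := q.del_dist_le hnq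
    have h2 : (G.deleteEdge e).toSimple.dist d w ≤ r.length := r.del_dist_le hnr
    have h3 : (G.deleteEdge e).toSimple.dist d c ≤
        (G.deleteEdge e).toSimple.dist d w + (G.deleteEdge e).toSimple.dist w c :=
      hconn'.dist_triangle
    rw [he] at hcd
    rcases Sym2.eq_iff.1 hcd with ⟨hc1, hc2⟩ | ⟨hc1, hc2⟩
    · subst hc1; subst hc2
      rw [SimpleGraph.dist_comm]
      omega
    · subst hc1; subst hc2
      omega
  rw [SimpleGraph.dist_comm] at hge
  omega

/-- Step lemma: walk one step along a geodesic. -/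
lemma simple_step {H : SimpleGraph V} (hc : H.Connected) {x y : V} {n : ℕ}
    (h : H.dist x y = n + 1) : ∃ z, H.Adj x z ∧ H.dist z y = n := by
  obtain ⟨p, hp⟩ := hc.exists_walk_length_eq_dist x y
  cases p with
  | nil =>
    rw [SimpleGraph.Walk.length_nil, h] at hp
    omega
  | @cons _ z _ hadj q =>
    rw [SimpleGraph.Walk.length_cons, h] at hp
    refine ⟨z, hadj, le_antisymm ?_ ?_⟩
    · have := SimpleGraph.dist_le q
      omega
    · have ht : H.dist x y ≤ H.dist x z + H.dist z y := hc.dist_triangle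
      have h1 : H.dist x z ≤ 1 :=
        SimpleGraph.dist_le (SimpleGraph.Walk.cons hadj SimpleGraph.Walk.nil)
      omega

/-- Key disjunction: a walk in `G` either stays in `G - e` or crosses `e`. -/
lemma walk_cases {e : E} {u v : V} (he : G.ends e = s(u, v))
    (hconn' : (G.deleteEdge e).toSimple.Connected) {x y : V} (p : G.toSimple.Walk x y) :
    (G.deleteEdge e).toSimple.dist x y ≤ p.length ∨
    (G.deleteEdge e).toSimple.dist x u + (G.deleteEdge e).toSimple.dist v y + 1 ≤ p.length ∨
    (G.deleteEdge e).toSimple.dist x v + (G.deleteEdge e).toSimple.dist u y + 1 ≤ p.length := by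
  induction p with
  | nil => left; rw [SimpleGraph.dist_self]; exact Nat.zero_le _
  | @cons a b c hadj q ih =>
    rw [SimpleGraph.Walk.length_cons]
    by_cases hab : (G.deleteEdge e).toSimple.Adj a b
    · have h1 : (G.deleteEdge e).toSimple.dist a b ≤ 1 :=
        SimpleGraph.dist_le (SimpleGraph.Walk.cons hab SimpleGraph.Walk.nil)
      rcases ih with h | h | h
      · left
        have h2 : (G.deleteEdge e).toSimple.dist a c ≤
            (G.deleteEdge e).toSimple.dist a b + (G.deleteEdge e).toSimple.dist b c :=
          hconn'.dist_triangle
        omega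
      · right; left
        have h2 : (G.deleteEdge e).toSimple.dist a u ≤
            (G.deleteEdge e).toSimple.dist a b + (G.deleteEdge e).toSimple.dist b u :=
          hconn'.dist_triangle
        omega
      · right; right
        have h2 : (G.deleteEdge e).toSimple.dist a v ≤
            (G.deleteEdge e).toSimple.dist a b + (G.deleteEdge e).toSimple.dist b v :=
          hconn'.dist_triangle
        omega
    · obtain ⟨hne, f, hf⟩ := hadj
      have hsab : s(a, b) = s(u, v) := by
        by_contra hs
        rcases eq_or_ne f e with rfl | hfe
        · exact hs (hf.symm.trans he)
        · exact hab ⟨hne, ⟨f, hfe⟩, hf⟩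
      rcases Sym2.eq_iff.1 hsab with ⟨h1, h2⟩ | ⟨h1, h2⟩
      · subst h1; subst h2
        rcases ih with h | h | h
        · right; left
          rw [SimpleGraph.dist_self]
          omega
        · right; left
          rw [SimpleGraph.dist_self]
          omega
        · left
          rw [SimpleGraph.dist_self] at h
          have h2 : (G.deleteEdge e).toSimple.dist a c ≤
              (G.deleteEdge e).toSimple.dist a c := le_refl _
          omega
      · subst h1; subst h2
        rcases ih with h | h | h
        · right; right
          rw [SimpleGraph.dist_self]
          omega
        · left
          rw [SimpleGraph.dist_self] at h
          omega
        · right; right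
          rw [SimpleGraph.dist_self]
          omega

end Multigraph

namespace Multigraph

variable {V E : Type*}

lemma mem_S {G : Multigraph V E} {u v : V} {i j : ℕ} {x : V} :
    x ∈ G.S u v i j ↔ G.toSimple.dist x u = i ∧ G.toSimple.dist x v = j := Iff.rfl

lemma S_comm (G : Multigraph V E) (u v : V) (i j : ℕ) :
    G.S v u j i = G.S u v i j := Set.ext fun _ => and_comm

lemma oneSide (G : Multigraph V E) (e : E) (u v : V)
    (he : G.ends e = s(u, v))
    (hconn : G.toSimple.Connected) (hconn' : (G.deleteEdge e).toSimple.Connected)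
    (hd8 : (G.deleteEdge e).toSimple.dist u v = 8)
    (hdiam4 : ∀ x y, G.toSimple.dist x y ≤ 4) :
    ((G.S u v 1 2).Nonempty ∧ (G.S u v 2 3).Nonempty ∧ (G.S u v 3 4).Nonempty ∧
      (G.S u v 4 4).Nonempty) ∧
    (∀ w ∈ G.S u v 1 2, ∃ x ∈ G.S u v 2 3, G.Adjm w x) ∧
    (∀ w ∈ G.S u v 2 3, ∃ x ∈ G.S u v 3 4, G.Adjm w x) ∧
    (∀ w ∈ G.S u v 3 4, ∃ x ∈ G.S u v 4 4, G.Adjm w x) ∧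
    (∀ w ∈ G.S u v 4 4, ∃ x ∈ G.S u v 3 4, G.Adjm w x) := by
  have hcomm : ∀ x y : V, (G.deleteEdge e).toSimple.dist x y =
      (G.deleteEdge e).toSimple.dist y x := fun x y => SimpleGraph.dist_comm
  have hcommH : ∀ x y : V, G.toSimple.dist x y = G.toSimple.dist y x :=
    fun x y => SimpleGraph.dist_comm
  have hab : ∀ x, 8 ≤ (G.deleteEdge e).toSimple.dist x u +
      (G.deleteEdge e).toSimple.dist x v := by
    intro x
    have h1 : (G.deleteEdge e).toSimple.dist u v ≤
        (G.deleteEdge e).toSimple.dist u x + (G.deleteEdge e).toSimple.dist x v :=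
      hconn'.dist_triangle
    have h2 := hcomm u x
    omega
  have hsub : ∀ x y : V, G.toSimple.dist x y ≤ (G.deleteEdge e).toSimple.dist x y := by
    intro x y
    obtain ⟨p, hp⟩ := hconn'.exists_walk_length_eq_dist x y
    obtain ⟨p', hp'⟩ := exists_le_walk p
    have := SimpleGraph.dist_le p'
    omega
  have hadjvu : G.toSimple.Adj v u := adj_of_ends_eq (he.trans Sym2.eq_swap)
  have hadjuv : G.toSimple.Adj u v := adj_of_ends_eq he
  have hadj1 : ∀ {x z : V}, G.toSimple.Adj x z → G.toSimple.dist x z ≤ 1 :=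
    fun h => SimpleGraph.dist_le (SimpleGraph.Walk.cons h .nil)
  have hadj1' : ∀ {x z : V}, (G.deleteEdge e).toSimple.Adj x z →
      (G.deleteEdge e).toSimple.dist x z ≤ 1 :=
    fun h => SimpleGraph.dist_le (SimpleGraph.Walk.cons h .nil)
  have hmin : ∀ x, G.toSimple.dist x u = min ((G.deleteEdge e).toSimple.dist x u)
        ((G.deleteEdge e).toSimple.dist x v + 1) ∧
      G.toSimple.dist x v = min ((G.deleteEdge e).toSimple.dist x v)
        ((G.deleteEdge e).toSimple.dist x u + 1) := by
    intro x
    have h1 : G.toSimple.dist x u ≤ (G.deleteEdge e).toSimple.dist x v + 1 := by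
      have t1 : G.toSimple.dist x u ≤ G.toSimple.dist x v + G.toSimple.dist v u :=
        hconn.dist_triangle
      have t2 := hsub x v
      have t3 := hadj1 hadjvu
      omega
    have h2 : G.toSimple.dist x v ≤ (G.deleteEdge e).toSimple.dist x u + 1 := by
      have t1 : G.toSimple.dist x v ≤ G.toSimple.dist x u + G.toSimple.dist u v :=
        hconn.dist_triangle
      have t2 := hsub x u
      have t3 := hadj1 hadjuv
      omega
    have h3 : min ((G.deleteEdge e).toSimple.dist x u)
        ((G.deleteEdge e).toSimple.dist x v + 1) ≤ G.toSimple.dist x u := by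
      obtain ⟨p, hp⟩ := hconn.exists_walk_length_eq_dist x u
      have h8 : (G.deleteEdge e).toSimple.dist v u = 8 := by rw [← hcomm]; exact hd8
      have h0 : (G.deleteEdge e).toSimple.dist u u = 0 := SimpleGraph.dist_self
      rcases walk_cases he hconn' p with h | h | h <;> rw [hp] at h <;> omega
    have h4 : min ((G.deleteEdge e).toSimple.dist x v)
        ((G.deleteEdge e).toSimple.dist x u + 1) ≤ G.toSimple.dist x v := by
      obtain ⟨p, hp⟩ := hconn.exists_walk_length_eq_dist x v
      have h0 : (G.deleteEdge e).toSimple.dist v v = 0 := SimpleGraph.dist_self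
      rcases walk_cases he hconn' p with h | h | h <;> rw [hp] at h <;> omega
    have h5 := hsub x u
    have h6 := hsub x v
    omega
  have hwcd : ∀ x y : V, (G.deleteEdge e).toSimple.dist x y ≤ G.toSimple.dist x y ∨
      (G.deleteEdge e).toSimple.dist x u + (G.deleteEdge e).toSimple.dist v y + 1 ≤
        G.toSimple.dist x y ∨
      (G.deleteEdge e).toSimple.dist x v + (G.deleteEdge e).toSimple.dist u y + 1 ≤
        G.toSimple.dist x y := by
    intro x y
    obtain ⟨p, hp⟩ := hconn.exists_walk_length_eq_dist x y
    rcases walk_cases he hconn' p with h | h | h <;> rw [hp] at h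
    · exact Or.inl h
    · exact Or.inr (Or.inl h)
    · exact Or.inr (Or.inr h)
  have htrans : ∀ x z : V, G.toSimple.Adj x z → x ≠ u → x ≠ v →
      (G.deleteEdge e).toSimple.Adj x z := by
    intro x z hxz hxu hxv
    obtain ⟨hne, f, hf⟩ := hxz
    refine ⟨hne, ⟨f, fun hfe => ?_⟩, hf⟩
    subst hfe
    rw [he] at hf
    rcases Sym2.eq_iff.1 hf.symm with ⟨hh, -⟩ | ⟨hh, -⟩
    · exact hxu hh
    · exact hxv hh
  have hlev : ∀ k : ℕ, k ≤ 8 → ∃ x, (G.deleteEdge e).toSimple.dist x u = k ∧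
      (G.deleteEdge e).toSimple.dist x v = 8 - k := by
    intro k
    induction k with
    | zero =>
      intro _
      exact ⟨u, SimpleGraph.dist_self, hd8⟩
    | succ k ih =>
      intro hk8
      obtain ⟨x, hax, hbx⟩ := ih (by omega)
      have hbx' : (G.deleteEdge e).toSimple.dist x v = (8 - (k + 1)) + 1 := by omega
      obtain ⟨z, hz, hdz⟩ := simple_step hconn' hbx'
      have t1 : (G.deleteEdge e).toSimple.dist z u ≤
          (G.deleteEdge e).toSimple.dist z x + (G.deleteEdge e).toSimple.dist x u :=
        hconn'.dist_triangle
      have t2 := hadj1' hz.symm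
      have t3 := hcomm z x
      have t4 := hab z
      exact ⟨z, by omega, hdz⟩
  have L1 : ∀ x k, k ≤ 3 → (G.deleteEdge e).toSimple.dist x u = k →
      G.toSimple.dist x u = k ∧ G.toSimple.dist x v = k + 1 := by
    intro x k hk hxk
    have h1 := (hmin x).1
    have h2 := (hmin x).2
    have h3 := hab x
    omega
  have L2 : ∀ x, (G.deleteEdge e).toSimple.dist x u = 4 →
      G.toSimple.dist x u = 4 ∧ G.toSimple.dist x v = 4 ∧
        (G.deleteEdge e).toSimple.dist x v = 4 := by
    intro x hx4
    have h1 := (hmin x).1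
    have h2 := (hmin x).2
    have h3 := hab x
    have h4 := hdiam4 x v
    omega
  have L3 : ∀ x k, k ≤ 3 → G.toSimple.dist x u = k → G.toSimple.dist x v = k + 1 →
      (G.deleteEdge e).toSimple.dist x u = k := by
    intro x k hk h1 h2
    have h3 := (hmin x).1
    have h4 := (hmin x).2
    omega
  have L3' : ∀ x, G.toSimple.dist x u = 4 → G.toSimple.dist x v = 4 →
      (G.deleteEdge e).toSimple.dist x u = 4 ∧ (G.deleteEdge e).toSimple.dist x v = 4 := by
    intro x h1 h2
    have h3 := (hmin x).1
    have h4 := (hmin x).2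
    omega
  have key : ∀ i : ℕ, 1 ≤ i → i ≤ 3 → ∀ w, G.toSimple.dist w u = i →
      G.toSimple.dist w v = i + 1 →
      ∃ z, G.Adjm w z ∧ (G.deleteEdge e).toSimple.dist z u = i + 1 := by
    intro i hi1 hi3 w hwu hwv
    have haw : (G.deleteEdge e).toSimple.dist w u = i := L3 w i hi3 hwu hwv
    obtain ⟨t, hat, hbt⟩ := hlev (i + 4) (by omega)
    have hd4 : G.toSimple.dist w t = 4 := by
      refine le_antisymm (hdiam4 w t) ?_
      have hvt : (G.deleteEdge e).toSimple.dist v t = 4 - i := by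
        rw [hcomm v t]; omega
      have hut : (G.deleteEdge e).toSimple.dist u t = i + 4 := by
        rw [hcomm u t]; exact hat
      have habw := hab w
      have htr : (G.deleteEdge e).toSimple.dist t u ≤
          (G.deleteEdge e).toSimple.dist t w + (G.deleteEdge e).toSimple.dist w u :=
        hconn'.dist_triangle
      have htc := hcomm t w
      rcases hwcd w t with h | h | h <;> omega
    obtain ⟨z, hz, hdz⟩ := simple_step hconn (show G.toSimple.dist w t = 3 + 1 from hd4)
    have hzu : z ≠ u := by
      intro hzeq
      rw [hzeq] at hdz hz
      have h1 := (hmin t).1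
      have h2 := hcommH t u
      have h4 := hadj1 hz
      omega
    have hzv : z ≠ v := by
      intro hzeq
      rw [hzeq] at hz
      have h4 := hadj1 hz
      omega
    have hwu' : w ≠ u := by
      intro hweq
      rw [hweq, SimpleGraph.dist_self] at hwu
      omega
    have hwv' : w ≠ v := by
      intro hweq
      rw [hweq, SimpleGraph.dist_self] at hwv
      omega
    have hz' : (G.deleteEdge e).toSimple.Adj w z := htrans w z hz hwu' hwv'
    have haz1 : (G.deleteEdge e).toSimple.dist z u ≤ i + 1 := by
      have htr : (G.deleteEdge e).toSimple.dist z u ≤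
          (G.deleteEdge e).toSimple.dist z w + (G.deleteEdge e).toSimple.dist w u :=
        hconn'.dist_triangle
      have h2 := hadj1' hz'.symm
      omega
    have haz3 : i + 1 ≤ (G.deleteEdge e).toSimple.dist z u := by
      have haz2 : i ≤ (G.deleteEdge e).toSimple.dist z u + 1 := by
        have htr : (G.deleteEdge e).toSimple.dist w u ≤
            (G.deleteEdge e).toSimple.dist w z + (G.deleteEdge e).toSimple.dist z u :=
          hconn'.dist_triangle
        have h2 := hadj1' hz'
        omega
      have htr : (G.deleteEdge e).toSimple.dist t u ≤
          (G.deleteEdge e).toSimple.dist t z + (G.deleteEdge e).toSimple.dist z u :=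
        hconn'.dist_triangle
      have htc := hcomm t z
      have hvt : (G.deleteEdge e).toSimple.dist v t = 4 - i := by
        rw [hcomm v t]; omega
      have hut : (G.deleteEdge e).toSimple.dist u t = i + 4 := by
        rw [hcomm u t]; exact hat
      rcases hwcd z t with h | h | h <;> omega
    obtain ⟨-, hadjm⟩ := hz
    exact ⟨z, hadjm, by omega⟩
  have key44 : ∀ w, G.toSimple.dist w u = 4 → G.toSimple.dist w v = 4 →
      ∃ z, G.Adjm w z ∧ (G.deleteEdge e).toSimple.dist z u = 3 := by
    intro w hwu hwv
    obtain ⟨ha4, hb4⟩ := L3' w hwu hwv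
    obtain ⟨z, hz, hdz⟩ := simple_step hconn (show G.toSimple.dist w u = 3 + 1 from hwu)
    have hzu : z ≠ u := by
      intro hzeq
      rw [hzeq, SimpleGraph.dist_self] at hdz
      omega
    have hzv : z ≠ v := by
      intro hzeq
      rw [hzeq] at hdz
      have h1 := (hmin v).1
      have h2 : (G.deleteEdge e).toSimple.dist v v = 0 := SimpleGraph.dist_self
      have h3 : (G.deleteEdge e).toSimple.dist v u = 8 := by rw [← hcomm]; exact hd8
      omega
    have hwu' : w ≠ u := by
      intro hweq
      rw [hweq, SimpleGraph.dist_self] at hwu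
      omega
    have hwv' : w ≠ v := by
      intro hweq
      rw [hweq, SimpleGraph.dist_self] at hwv
      omega
    have hz' : (G.deleteEdge e).toSimple.Adj w z := htrans w z hz hwu' hwv'
    have hbz : 3 ≤ (G.deleteEdge e).toSimple.dist z v := by
      have htr : (G.deleteEdge e).toSimple.dist w v ≤
          (G.deleteEdge e).toSimple.dist w z + (G.deleteEdge e).toSimple.dist z v :=
        hconn'.dist_triangle
      have h2 := hadj1' hz'
      omega
    have haz : (G.deleteEdge e).toSimple.dist z u = 3 := by
      have h1 := (hmin z).1
      omega
    obtain ⟨-, hadjm⟩ := hz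
    exact ⟨z, hadjm, haz⟩
  obtain ⟨x1, hx1a, -⟩ := hlev 1 (by omega)
  obtain ⟨x2, hx2a, -⟩ := hlev 2 (by omega)
  obtain ⟨x3, hx3a, -⟩ := hlev 3 (by omega)
  obtain ⟨x4, hx4a, -⟩ := hlev 4 (by omega)
  have m1 := L1 x1 1 (by omega) hx1a
  have m2 := L1 x2 2 (by omega) hx2a
  have m3 := L1 x3 3 (by omega) hx3a
  have m4 := L2 x4 hx4a
  refine ⟨⟨⟨x1, m1.1, m1.2⟩, ⟨x2, m2.1, m2.2⟩, ⟨x3, m3.1, m3.2⟩, ⟨x4, m4.1, m4.2.1⟩⟩,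
    ?_, ?_, ?_, ?_⟩
  · intro w hw
    obtain ⟨z, hadjm, hz⟩ := key 1 (by omega) (by omega) w hw.1 hw.2
    have hm := L1 z 2 (by omega) hz
    exact ⟨z, ⟨hm.1, hm.2⟩, hadjm⟩
  · intro w hw
    obtain ⟨z, hadjm, hz⟩ := key 2 (by omega) (by omega) w hw.1 hw.2
    have hm := L1 z 3 (by omega) hz
    exact ⟨z, ⟨hm.1, hm.2⟩, hadjm⟩
  · intro w hw
    obtain ⟨z, hadjm, hz⟩ := key 3 (by omega) (by omega) w hw.1 hw.2
    have hm := L2 z hz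
    exact ⟨z, ⟨hm.1, hm.2.1⟩, hadjm⟩
  · intro w hw
    obtain ⟨z, hadjm, hz⟩ := key44 w hw.1 hw.2
    have hm := L1 z 3 (by omega) hz
    exact ⟨z, ⟨hm.1, hm.2⟩, hadjm⟩

end Multigraph

/-- Let `G` be a bridgeless graph with `d(G) = 4` and let `uv` be an edge
with `l_G(uv) = g*(G) = 9`. Then each of `S₁₂, S₂₁, S₂₃, S₃₂, S₃₄, S₄₃, S₄₄` is nonempty;
moreover every vertex of `S₁₂` has a neighbour in `S₂₃`, every vertex of `S₂₁` has a
neighbour in `S₃₂`, every vertex of `S₂₃` has a neighbour in `S₃₄`, every vertex of `S₃₂`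
has a neighbour in `S₄₃`, every vertex of `S₃₄` has a neighbour in `S₄₄`, every vertex of
`S₄₃` has a neighbour in `S₄₄`, and every vertex of `S₄₄` has a neighbour in `S₃₄` and a
neighbour in `S₄₃`. -/
theorem stmt16 {V E : Type*} [Fintype V] [Fintype E] (G : Multigraph V E)
    (hconn : G.toSimple.Connected) (hbridgeless : G.Bridgeless) (hdiam : G.diam = 4)
    (u v : V) (e : E) (he : G.ends e = s(u, v))
    (hmax : G.edgeGirth e = G.maxEdgeGirth) (h9 : G.maxEdgeGirth = 9) :
    ((G.S u v 1 2).Nonempty ∧ (G.S u v 2 1).Nonempty ∧ (G.S u v 2 3).Nonempty ∧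
      (G.S u v 3 2).Nonempty ∧ (G.S u v 3 4).Nonempty ∧ (G.S u v 4 3).Nonempty ∧
      (G.S u v 4 4).Nonempty) ∧
    (∀ w ∈ G.S u v 1 2, ∃ x ∈ G.S u v 2 3, G.Adjm w x) ∧
    (∀ w ∈ G.S u v 2 1, ∃ x ∈ G.S u v 3 2, G.Adjm w x) ∧
    (∀ w ∈ G.S u v 2 3, ∃ x ∈ G.S u v 3 4, G.Adjm w x) ∧
    (∀ w ∈ G.S u v 3 2, ∃ x ∈ G.S u v 4 3, G.Adjm w x) ∧
    (∀ w ∈ G.S u v 3 4, ∃ x ∈ G.S u v 4 4, G.Adjm w x) ∧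
    (∀ w ∈ G.S u v 4 3, ∃ x ∈ G.S u v 4 4, G.Adjm w x) ∧
    (∀ w ∈ G.S u v 4 4,
      (∃ x ∈ G.S u v 3 4, G.Adjm w x) ∧ (∃ x ∈ G.S u v 4 3, G.Adjm w x)) := by
  classical
  have hg : G.edgeGirth e = 9 := hmax.trans h9
  have hconn' := hbridgeless e
  have hd8 := Multigraph.dist_del_eq_eight he hg hconn'
  have hdiam4 : ∀ x y, G.toSimple.dist x y ≤ 4 := by
    intro x y
    have hmem : G.toSimple.dist x y ∈ {n | ∃ a b, G.dist a b = n} := ⟨x, y, rfl⟩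
    have hbdd : BddAbove {n | ∃ a b : V, G.dist a b = n} := by
      refine ⟨Fintype.card V, ?_⟩
      rintro n ⟨a, b, rfl⟩
      obtain ⟨p, hp⟩ := hconn.exists_walk_length_eq_dist a b
      have h1 := SimpleGraph.dist_le p.bypass
      have h2 := p.bypass_isPath.length_lt
      have h3 := p.length_bypass_le
      show G.toSimple.dist a b ≤ Fintype.card V
      omega
    have hle := le_csSup hbdd hmem
    rw [Multigraph.diam] at hdiam
    omega
  have hd8' : (G.deleteEdge e).toSimple.dist v u = 8 := by
    rw [SimpleGraph.dist_comm]; exact hd8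
  obtain ⟨⟨n12, n23, n34, n44⟩, c12, c23, c34, c44⟩ :=
    Multigraph.oneSide G e u v he hconn hconn' hd8 hdiam4
  obtain ⟨⟨n21, n32, n43, -⟩, c21, c32, c43, c44'⟩ :=
    Multigraph.oneSide G e v u (he.trans Sym2.eq_swap) hconn hconn' hd8' hdiam4
  have swap : ∀ {w : V} {i j : ℕ}, w ∈ G.S u v i j → w ∈ G.S v u j i := by
    intro w i j hw
    exact Multigraph.mem_S.2 ⟨(Multigraph.mem_S.1 hw).2, (Multigraph.mem_S.1 hw).1⟩
  have swap' : ∀ {w : V} {i j : ℕ}, w ∈ G.S v u j i → w ∈ G.S u v i j := by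
    intro w i j hw
    exact Multigraph.mem_S.2 ⟨(Multigraph.mem_S.1 hw).2, (Multigraph.mem_S.1 hw).1⟩
  refine ⟨⟨n12, ?_, n23, ?_, n34, ?_, n44⟩, c12, ?_, c23, ?_, c34, ?_, ?_⟩
  · obtain ⟨x, hx⟩ := n21; exact ⟨x, swap' hx⟩
  · obtain ⟨x, hx⟩ := n32; exact ⟨x, swap' hx⟩
  · obtain ⟨x, hx⟩ := n43; exact ⟨x, swap' hx⟩
  · intro w hw
    obtain ⟨x, hx, hadj⟩ := c21 w (swap hw)
    exact ⟨x, swap' hx, hadj⟩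
  · intro w hw
    obtain ⟨x, hx, hadj⟩ := c32 w (swap hw)
    exact ⟨x, swap' hx, hadj⟩
  · intro w hw
    obtain ⟨x, hx, hadj⟩ := c43 w (swap hw)
    exact ⟨x, swap' hx, hadj⟩
  · intro w hw
    refine ⟨c44 w hw, ?_⟩
    obtain ⟨x, hx, hadj⟩ := c44' w (swap hw)
    exact ⟨x, swap' hx, hadj⟩
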